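/- A group E is isomorphic to a crossed product of the infinite cyclic group by the infinite cyclic group (equivalently, E has a normal subgroup N isomorphic to ℤ such that E/N is isomorphic to ℤ) if and only if E is isomorphic to ℤ × ℤ or E is isomorphic to the presented group on two generators g₁, g₂ with the single relator g₁·g₂·g₁·g₂^(−1) (the Klein bottle group). -/

import Mathlib

open Subgroup

section NormalForm
variable {H : Type*} [Group H] {x y : H} {u : ℤˣ}

lemma conj_self_zpow (h : y * x * y⁻¹ = x ^ (u : ℤ)) :
    ∀ b : ℤ, y ^ b * x * y ^ (-b) = x ^ ((u ^ b : ℤˣ) : ℤ) := by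
  have hu2 : (u : ℤ) * (u : ℤ) = 1 := by rcases Int.units_eq_one_or u with h | h <;> simp [h]
  have hinv : y⁻¹ * x * y = x ^ (u : ℤ) := by
    have h2 : (y * x * y⁻¹) ^ (u : ℤ) = x ^ ((u : ℤ) * (u : ℤ)) := by
      rw [h, zpow_mul]
    rw [conj_zpow, hu2, zpow_one] at h2
    calc y⁻¹ * x * y = y⁻¹ * (y * x ^ (u : ℤ) * y⁻¹) * y := by rw [h2]
    _ = x ^ (u : ℤ) := by group
  intro b
  induction b using Int.induction_on with
  | zero => simp
  | succ k ih =>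
    have e1 : y ^ ((k : ℤ) + 1) * x * y ^ (-((k : ℤ) + 1)) =
        y * (y ^ (k : ℤ) * x * y ^ (-(k : ℤ))) * y⁻¹ := by group
    rw [e1, ih, ← conj_zpow, h, ← zpow_mul]
    congr 1
    rw [zpow_add, zpow_one, Units.val_mul, mul_comm]
  | pred k ih =>
    have e1 : y ^ (-(k : ℤ) - 1) * x * y ^ (-(-(k : ℤ) - 1)) =
        y⁻¹ * (y ^ (-(k : ℤ)) * x * y ^ (-(-(k : ℤ)))) * y := by group
    have h3 : (y⁻¹ * x * y⁻¹⁻¹) ^ ((u ^ (-(k:ℤ)) : ℤˣ) : ℤ) =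
        y⁻¹ * x ^ ((u ^ (-(k:ℤ)) : ℤˣ) : ℤ) * y⁻¹⁻¹ := conj_zpow
    rw [inv_inv] at h3
    rw [e1, ih, ← h3, hinv, ← zpow_mul]
    congr 1
    rw [zpow_sub, zpow_one, Units.val_mul, mul_comm]
    congr 1
    rcases Int.units_eq_one_or u with h | h <;> simp [h]

lemma conj_zpow_zpow (h : y * x * y⁻¹ = x ^ (u : ℤ)) (b a : ℤ) :
    y ^ b * x ^ a * y ^ (-b) = x ^ (a * ((u ^ b : ℤˣ) : ℤ)) := by
  have : y ^ b * x ^ a * y ^ (-b) = (y ^ b * x * (y ^ b)⁻¹) ^ a := by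
    rw [conj_zpow]; rw [zpow_neg]
  rw [this, ← zpow_neg, conj_self_zpow h, ← zpow_mul, mul_comm]

lemma exists_zpow_zpow (h : y * x * y⁻¹ = x ^ (u : ℤ))
    (hcl : Subgroup.closure {x, y} = ⊤) (z : H) :
    ∃ a b : ℤ, z = x ^ a * y ^ b := by
  have hz : z ∈ Subgroup.closure ({x, y} : Set H) := hcl ▸ Subgroup.mem_top z
  induction hz using Subgroup.closure_induction with
  | mem w hw =>
    rcases hw with rfl | rfl
    · exact ⟨1, 0, by simp⟩
    · exact ⟨0, 1, by simp⟩
  | one => exact ⟨0, 0, by simp⟩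
  | mul w v _ _ ihw ihv =>
    obtain ⟨a, b, rfl⟩ := ihw
    obtain ⟨c, d, rfl⟩ := ihv
    refine ⟨a + c * ((u ^ b : ℤˣ) : ℤ), b + d, ?_⟩
    have : x ^ a * y ^ b * (x ^ c * y ^ d) =
        x ^ a * (y ^ b * x ^ c * y ^ (-b)) * y ^ (b + d) := by group
    rw [this, conj_zpow_zpow h, ← zpow_add]
  | inv w _ ihw =>
    obtain ⟨a, b, rfl⟩ := ihw
    refine ⟨-a * ((u ^ (-b) : ℤˣ) : ℤ), -b, ?_⟩
    have : (x ^ a * y ^ b)⁻¹ = y ^ (-b) * x ^ (-a) * y ^ (-(-b)) * y ^ (-b) := by group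
    rw [this, conj_zpow_zpow h]

end NormalForm

def ZZExt (E : Type*) [Group E] : Prop :=
  ∃ N : Subgroup E, ∃ hN : N.Normal,
    Nonempty (N ≃* Multiplicative ℤ) ∧
    (haveI := hN; Nonempty (E ⧸ N ≃* Multiplicative ℤ))

lemma ZZExt.transport {E E' : Type*} [Group E] [Group E'] (f : E ≃* E') (h : ZZExt E') :
    ZZExt E := by
  obtain ⟨N', hN', ⟨α⟩, ⟨β⟩⟩ := h
  have hmap : (N'.comap f.toMonoidHom).map f.toMonoidHom = N' :=
    Subgroup.map_comap_eq_self_of_surjective f.surjective N'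
  refine ⟨N'.comap f.toMonoidHom, Subgroup.Normal.comap hN' f.toMonoidHom, ⟨?_⟩, ⟨?_⟩⟩
  · exact ((f.subgroupMap (N'.comap f.toMonoidHom)).trans
      (MulEquiv.subgroupCongr hmap)).trans α
  · exact (QuotientGroup.congr _ _ f hmap).trans β

lemma ZZExt.of_ker_range {H : Type*} [Group H] (f : H →* Multiplicative ℤ)
    (g : Multiplicative ℤ →* H) (hf : Function.Surjective f) (hg : Function.Injective g)
    (hrg : g.range = f.ker) : ZZExt H := by
  refine ⟨f.ker, f.normal_ker, ⟨?_⟩, ⟨QuotientGroup.quotientKerEquivOfSurjective f hf⟩⟩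
  exact ((MonoidHom.ofInjective hg).trans (MulEquiv.subgroupCongr hrg)).symm

namespace KleinAux

open Multiplicative SemidirectProduct

abbrev krels : Set (FreeGroup (Fin 2)) :=
  {FreeGroup.of 0 * FreeGroup.of 1 * FreeGroup.of 0 * (FreeGroup.of 1)⁻¹}

abbrev K := PresentedGroup krels

def k₁ : K := PresentedGroup.of 0
def k₂ : K := PresentedGroup.of 1

lemma krel : k₁ * k₂ * k₁ * k₂⁻¹ = 1 := by
  have h : (PresentedGroup.mk krels)
      (FreeGroup.of 0 * FreeGroup.of 1 * FreeGroup.of 0 * (FreeGroup.of 1)⁻¹) = 1 := by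
    have : (FreeGroup.of 0 * FreeGroup.of 1 * FreeGroup.of 0 * (FreeGroup.of 1)⁻¹ :
        FreeGroup (Fin 2)) ∈ Subgroup.normalClosure krels :=
      Subgroup.subset_normalClosure rfl
    exact (QuotientGroup.eq_one_iff _).mpr this
  simpa [map_mul, map_inv, k₁, k₂, PresentedGroup.of] using h

lemma krel' : k₁ * k₂ * k₁ = k₂ := mul_inv_eq_one.mp krel

lemma kconj : k₂ * k₁ * k₂⁻¹ = k₁ ^ (((-1 : ℤˣ) : ℤ)) := by
  have h2 : k₂ * k₁ = k₁⁻¹ * k₂ := by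
    conv_rhs => rw [← krel']
    group
  calc k₂ * k₁ * k₂⁻¹ = k₁⁻¹ * (k₂ * k₂⁻¹) := by rw [h2]; group
  _ = k₁ ^ (((-1 : ℤˣ) : ℤ)) := by simp

lemma kclosure : Subgroup.closure ({k₁, k₂} : Set K) = ⊤ := by
  rw [eq_top_iff, ← PresentedGroup.closure_range_of krels]
  refine (Subgroup.closure_le _).mpr ?_
  rintro _ ⟨i, rfl⟩
  fin_cases i
  · exact Subgroup.subset_closure (Set.mem_insert _ _)
  · exact Subgroup.subset_closure (Set.mem_insert_of_mem _ rfl)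

lemma knormal_form (z : K) : ∃ a b : ℤ, z = k₁ ^ a * k₂ ^ b :=
  exists_zpow_zpow kconj kclosure z

def φK : Multiplicative ℤ →* MulAut (Multiplicative ℤ) :=
  zpowersHom _ (MulEquiv.inv (Multiplicative ℤ))

abbrev G := SemidirectProduct (Multiplicative ℤ) (Multiplicative ℤ) φK

lemma φK_ofAdd_one (x : Multiplicative ℤ) : φK (ofAdd (1:ℤ)) x = x⁻¹ := by
  simp [φK, zpowersHom_apply]

lemma θG_rel : ∀ r ∈ krels, FreeGroup.lift
    (![inl (ofAdd (1:ℤ)), inr (ofAdd (1:ℤ))] : Fin 2 → G) r = 1 := by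
  intro r hr
  rw [Set.mem_singleton_iff] at hr
  subst hr
  simp only [map_mul, map_inv]
  simp only [FreeGroup.lift_apply_of, Matrix.cons_val_zero, Matrix.cons_val_one, Matrix.head_cons]
  have haut : (inr (ofAdd (1:ℤ)) * inl (ofAdd (1:ℤ)) * (inr (ofAdd (1:ℤ)))⁻¹ : G) =
      inl ((ofAdd (1:ℤ))⁻¹) := by
    rw [← map_inv, ← φK_ofAdd_one (ofAdd (1:ℤ))]
    exact (inl_aut _ _).symm
  calc (inl (ofAdd (1:ℤ)) * inr (ofAdd (1:ℤ)) * inl (ofAdd (1:ℤ)) * (inr (ofAdd (1:ℤ)))⁻¹ : G)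
      = inl (ofAdd (1:ℤ)) * (inr (ofAdd (1:ℤ)) * inl (ofAdd (1:ℤ)) * (inr (ofAdd (1:ℤ)))⁻¹) := by group
  _ = inl (ofAdd (1:ℤ)) * inl ((ofAdd (1:ℤ))⁻¹) := by rw [haut]
  _ = 1 := by rw [← map_mul]; simp

def θG : K →* G := PresentedGroup.toGroup θG_rel

lemma θG_k₁ : θG k₁ = inl (ofAdd (1:ℤ)) := PresentedGroup.toGroup.of θG_rel
lemma θG_k₂ : θG k₂ = inr (ofAdd (1:ℤ)) := PresentedGroup.toGroup.of θG_rel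

lemma θG_nf (a b : ℤ) : θG (k₁ ^ a * k₂ ^ b) = inl (ofAdd a) * inr (ofAdd b) := by
  rw [map_mul, map_zpow, map_zpow, θG_k₁, θG_k₂, ← map_zpow inl, ← map_zpow inr]
  congr 1 <;> · congr 1; rw [← ofAdd_zsmul]; congr 1; simp

lemma θG_bijective : Function.Bijective θG := by
  constructor
  · rw [injective_iff_map_eq_one]
    intro z hz
    obtain ⟨a, b, rfl⟩ := knormal_form z
    rw [θG_nf] at hz
    rw [← mk_eq_inl_mul_inr] at hz
    have h1 : (ofAdd a : Multiplicative ℤ) = 1 := congrArg SemidirectProduct.left hz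
    have h2 : (ofAdd b : Multiplicative ℤ) = 1 := congrArg SemidirectProduct.right hz
    have ha : a = 0 := by simpa using congrArg toAdd h1
    have hb : b = 0 := by simpa using congrArg toAdd h2
    simp [ha, hb]
  · intro g
    refine ⟨k₁ ^ (toAdd g.left) * k₂ ^ (toAdd g.right), ?_⟩
    rw [θG_nf]
    simp only [ofAdd_toAdd]
    rw [← mk_eq_inl_mul_inr]

noncomputable def eqvKG : K ≃* G := MulEquiv.ofBijective θG θG_bijective

lemma zzext_G : ZZExt G :=
  ZZExt.of_ker_range rightHom inl rightHom_surjective inl_injective range_inl_eq_ker_rightHom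

lemma zzext_K : ZZExt K := zzext_G.transport eqvKG

end KleinAux

open Multiplicative in
lemma zzext_ZZ : ZZExt (Multiplicative (ℤ × ℤ)) := by
  refine ZZExt.of_ker_range (AddMonoidHom.toMultiplicative (AddMonoidHom.snd ℤ ℤ))
    (AddMonoidHom.toMultiplicative (AddMonoidHom.inl ℤ ℤ)) ?_ ?_ ?_
  · intro z
    exact ⟨ofAdd (0, toAdd z), by simp⟩
  · intro a b h
    simpa [Prod.ext_iff] using h
  · ext x
    simp only [MonoidHom.mem_range, MonoidHom.mem_ker]
    constructor
    · rintro ⟨y, rfl⟩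
      simp
    · intro h
      refine ⟨ofAdd (toAdd x).1, ?_⟩
      have h2 : (toAdd x).2 = 0 := by simpa using h
      simp only [AddMonoidHom.toMultiplicative_apply_apply, AddMonoidHom.inl_apply, toAdd_ofAdd]
      rw [← h2]
      simp

open Multiplicative

lemma mzpow (k : ℤ) : (ofAdd (1:ℤ)) ^ k = ofAdd k := by
  rw [← ofAdd_zsmul]; simp

/-- A group `E` is an extension of the infinite cyclic group by the infinite cyclic group
iff `E ≅ ℤ × ℤ` or `E` is the Klein bottle group `⟨g₁, g₂ ∣ g₁ g₂ g₁ = g₂⟩`. -/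
theorem crossed_product_infinite_cyclic_by_infinite_cyclic (E : Type*) [Group E] :
    (∃ N : Subgroup E, ∃ hN : N.Normal,
        Nonempty (N ≃* Multiplicative ℤ) ∧
        (haveI := hN; Nonempty (E ⧸ N ≃* Multiplicative ℤ))) ↔
      (Nonempty (E ≃* Multiplicative (ℤ × ℤ)) ∨
        Nonempty (E ≃* PresentedGroup
          ({FreeGroup.of 0 * FreeGroup.of 1 * FreeGroup.of 0 * (FreeGroup.of 1)⁻¹} :
            Set (FreeGroup (Fin 2))))) := by
  constructor
  · rintro ⟨N, hN, ⟨α⟩, hβ⟩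
    haveI := hN
    obtain ⟨β⟩ := hβ
    set n' : N := α.symm (ofAdd 1) with hn'
    set n : E := (n' : E) with hn
    -- every element of N is a power of n
    have hval : ∀ m : N, (m : E) = n ^ (toAdd (α m)) := by
      intro m
      have h1 : m = n' ^ (toAdd (α m)) := by
        apply α.injective
        rw [map_zpow, hn', MulEquiv.apply_symm_apply, mzpow]
        simp
      rw [hn, ← SubgroupClass.coe_zpow, ← h1]
    -- n has infinite order
    have hninf : ∀ m : ℤ, n ^ m = 1 → m = 0 := by
      intro m hm
      have h1 : (n' ^ m : N) = (1 : N) := by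
        apply Subtype.ext
        rw [SubgroupClass.coe_zpow]
        simpa using hm
      have h2 := congrArg α h1
      rw [map_zpow, map_one, hn', MulEquiv.apply_symm_apply, mzpow] at h2
      simpa using congrArg toAdd h2
    -- a lift of the generator of the quotient
    obtain ⟨e, he⟩ := QuotientGroup.mk'_surjective N (β.symm (ofAdd 1))
    set π := QuotientGroup.mk' N with hπ
    have hπe : ∀ b : ℤ, β (π (e ^ b)) = ofAdd b := by
      intro b
      rw [map_zpow, he, map_zpow, MulEquiv.apply_symm_apply, mzpow]
    have hπn : π n = 1 := by
      rw [← MonoidHom.mem_ker, QuotientGroup.ker_mk']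
      exact n'.2
    -- uniqueness of normal forms
    have huniq : ∀ a b : ℤ, n ^ a * e ^ b = 1 → a = 0 ∧ b = 0 := by
      intro a b h
      have h2 := congrArg π h
      rw [map_mul, map_zpow, hπn, one_zpow, one_mul, map_one] at h2
      have h3 := congrArg β h2
      rw [hπe b, map_one] at h3
      have hb : b = 0 := by simpa using congrArg toAdd h3
      subst hb
      rw [zpow_zero, mul_one] at h
      exact ⟨hninf a h, rfl⟩
    -- E is generated by n and e
    have hcl : Subgroup.closure ({n, e} : Set E) = ⊤ := by
      rw [eq_top_iff]
      intro x _
      set b := toAdd (β (π x)) with hb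
      have hmem : x * e ^ (-b) ∈ N := by
        have h1 : π (x * e ^ (-b)) = 1 := by
          apply β.injective
          rw [map_mul, map_mul, hπe (-b), map_one]
          simp [hb]
        rw [← QuotientGroup.ker_mk' N, MonoidHom.mem_ker]
        exact h1
      have hx : x = n ^ (toAdd (α ⟨x * e ^ (-b), hmem⟩)) * e ^ b := by
        have h2 := hval ⟨x * e ^ (-b), hmem⟩
        simp only [Subgroup.coe_mk] at h2
        calc x = (x * e ^ (-b)) * e ^ b := by group
        _ = _ := congrArg (fun t => t * e ^ b) h2
      rw [hx]
      exact mul_mem (zpow_mem (Subgroup.subset_closure (by simp)) _)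
        (zpow_mem (Subgroup.subset_closure (by simp)) _)
    -- conjugation of n by e is n^u for a unit u
    have hmem1 : e * n * e⁻¹ ∈ N := hN.conj_mem n n'.2 e
    have hmem2 : e⁻¹ * n * e ∈ N := by
      have := hN.conj_mem n n'.2 e⁻¹
      simpa using this
    obtain ⟨u, hu⟩ : ∃ u : ℤˣ, e * n * e⁻¹ = n ^ ((u : ℤˣ) : ℤ) := by
      set a := toAdd (α ⟨e * n * e⁻¹, hmem1⟩) with ha
      set c := toAdd (α ⟨e⁻¹ * n * e, hmem2⟩) with hc
      have h1 : e * n * e⁻¹ = n ^ a := by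
        have := hval ⟨e * n * e⁻¹, hmem1⟩
        simpa using this
      have h2 : e⁻¹ * n * e = n ^ c := by
        have := hval ⟨e⁻¹ * n * e, hmem2⟩
        simpa using this
      have h3 : (e⁻¹ * n * e⁻¹⁻¹) ^ a = e⁻¹ * n ^ a * e⁻¹⁻¹ := conj_zpow
      rw [inv_inv] at h3
      have key : n = n ^ (c * a) := by
        calc n = e⁻¹ * (e * n * e⁻¹) * e := by group
        _ = e⁻¹ * n ^ a * e := by rw [h1]
        _ = (e⁻¹ * n * e) ^ a := h3.symm
        _ = (n ^ c) ^ a := by rw [h2]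
        _ = n ^ (c * a) := by rw [← zpow_mul]
      have h0 : n ^ (c * a - 1) = 1 := by
        rw [zpow_sub, zpow_one, ← key]
        simp
      have hca : c * a = 1 := by
        have := hninf _ h0
        omega
      have hun : IsUnit a := IsUnit.of_mul_eq_one (b := c) (by linarith [mul_comm a c])
      obtain ⟨u, hu⟩ := hun
      exact ⟨u, by rw [hu, h1]⟩
    rcases Int.units_eq_one_or u with h1 | h1
    · -- abelian case : E ≃ ℤ × ℤ
      left
      rw [h1] at hu
      have hcomm : Commute n e := by
        have : e * n = n * e := by
          have : e * n * e⁻¹ * e = n * e := by rw [hu]; simp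
          simpa using this
        exact this.symm
      have hmapmul : ∀ p q : Multiplicative (ℤ × ℤ),
          n ^ (toAdd (p * q)).1 * e ^ (toAdd (p * q)).2 =
            (n ^ (toAdd p).1 * e ^ (toAdd p).2) * (n ^ (toAdd q).1 * e ^ (toAdd q).2) := by
        intro p q
        have hc : Commute (e ^ (toAdd p).2) (n ^ (toAdd q).1) :=
          (hcomm.symm).zpow_zpow _ _
        have : toAdd (p * q) = toAdd p + toAdd q := rfl
        rw [this, Prod.fst_add, Prod.snd_add, zpow_add, zpow_add]
        calc n ^ (toAdd p).1 * n ^ (toAdd q).1 * (e ^ (toAdd p).2 * e ^ (toAdd q).2)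
            = n ^ (toAdd p).1 * (n ^ (toAdd q).1 * e ^ (toAdd p).2) * e ^ (toAdd q).2 := by group
        _ = n ^ (toAdd p).1 * (e ^ (toAdd p).2 * n ^ (toAdd q).1) * e ^ (toAdd q).2 := by
            rw [hc.eq]
        _ = _ := by group
      set ψ : Multiplicative (ℤ × ℤ) →* E :=
        MonoidHom.mk' (fun p => n ^ (toAdd p).1 * e ^ (toAdd p).2)
          (fun p q => hmapmul p q) with hψ
      have hbij : Function.Bijective ψ := by
        constructor
        · rw [injective_iff_map_eq_one]
          intro p hp
          have := huniq _ _ hp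
          have hp0 : toAdd p = 0 := Prod.ext this.1 this.2
          have : p = ofAdd 0 := by
            rw [← hp0]
            simp
          simpa using this
        · intro x
          have hcu : e * n * e⁻¹ = n ^ (((1 : ℤˣ) : ℤˣ) : ℤ) := by simpa using hu
          obtain ⟨a, b, hab⟩ := exists_zpow_zpow hcu hcl x
          exact ⟨ofAdd (a, b), by simp [hψ, hab]⟩
      exact ⟨(MulEquiv.ofBijective ψ hbij).symm⟩
    · -- Klein bottle case
      right
      rw [h1] at hu
      have hrel : ∀ r ∈ KleinAux.krels, FreeGroup.lift (![n, e] : Fin 2 → E) r = 1 := by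
        intro r hr
        rw [Set.mem_singleton_iff] at hr
        subst hr
        simp only [map_mul, map_inv, FreeGroup.lift_apply_of, Matrix.cons_val_zero, Matrix.cons_val_one,
          Matrix.head_cons]
        have hinv : e * n * e⁻¹ = n⁻¹ := by
          rw [hu]
          simp
        calc n * e * n * e⁻¹ = n * (e * n * e⁻¹) := by group
        _ = n * n⁻¹ := by rw [hinv]
        _ = 1 := by simp
      set θ : KleinAux.K →* E := PresentedGroup.toGroup hrel with hθ
      have hθ1 : θ KleinAux.k₁ = n := PresentedGroup.toGroup.of hrel
      have hθ2 : θ KleinAux.k₂ = e := PresentedGroup.toGroup.of hrel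
      have hbij : Function.Bijective θ := by
        constructor
        · rw [injective_iff_map_eq_one]
          intro z hz
          obtain ⟨a, b, rfl⟩ := KleinAux.knormal_form z
          rw [map_mul, map_zpow, map_zpow, hθ1, hθ2] at hz
          obtain ⟨ha, hb⟩ := huniq _ _ hz
          simp [ha, hb]
        · intro x
          obtain ⟨a, b, hab⟩ := exists_zpow_zpow hu hcl x
          exact ⟨KleinAux.k₁ ^ a * KleinAux.k₂ ^ b, by
            rw [map_mul, map_zpow, map_zpow, hθ1, hθ2, hab]⟩
      exact ⟨(MulEquiv.ofBijective θ hbij).symm⟩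
  · intro h
    rcases h with hf | hf
    · obtain ⟨f⟩ := hf
      exact ZZExt.transport f zzext_ZZ
    · obtain ⟨f⟩ := hf
      exact ZZExt.transport f KleinAux.zzext_K
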